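/- With P_{L,p} the p-lazy probability matrix related to an X^k_+-matrix L and A_{L,p} its propagation matrix, the intertwining relation A_{L,p} T = T P_{L,p} holds, where T sends a function f on S = X^k_± ∪ {Θ} to the cochain Tf(σ_+) = f(σ_+) − f(σ_-); hence T P_{L,p}^n ν = A_{L,p}^n T ν for all n. -/

import Mathlib

open Matrix

/-- `L D_L⁻¹`, where `D_L` is the diagonal matrix with the nonzero diagonal entries of `L`
(and `1` elsewhere). -/
noncomputable def LDinv {ι : Type*} [Fintype ι] (L : Matrix ι ι ℝ) : Matrix ι ι ℝ :=
  fun i j => L i j / (if L j j = 0 then 1 else L j j)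

/-- `K = max_{σ_+} Σ_{σ'_+ ≠ σ_+} |(L D_L⁻¹)_{σ'_+, σ_+}|`. -/
noncomputable def Kconst {ι : Type*} [Fintype ι] [DecidableEq ι] [Nonempty ι]
    (L : Matrix ι ι ℝ) : ℝ :=
  Finset.univ.sup' Finset.univ_nonempty
    (fun j => ∑ i ∈ Finset.univ.erase j, |LDinv L i j|)

/-- The p-lazy propagation matrix `A_{L,p} = ((p(K-1)+1)/K) I - ((1-p)/K) L D_L⁻¹`. -/
noncomputable def Aprop {ι : Type*} [Fintype ι] [DecidableEq ι] [Nonempty ι]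
    (L : Matrix ι ι ℝ) (p : ℝ) : Matrix ι ι ℝ :=
  ((p * (Kconst L - 1) + 1) / Kconst L) • (1 : Matrix ι ι ℝ)
    - ((1 - p) / Kconst L) • LDinv L

/-- The p-lazy probability matrix `P_{L,p}` on `S = X^k_± ∪ {Θ} = (ι ⊕ ι) ⊕ Unit`. -/
noncomputable def Pprob {ι : Type*} [Fintype ι] [DecidableEq ι] [Nonempty ι]
    (L : Matrix ι ι ℝ) (p : ℝ) : Matrix ((ι ⊕ ι) ⊕ Unit) ((ι ⊕ ι) ⊕ Unit) ℝ :=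
  fun s' s =>
    match s', s with
    | .inl (.inl i), .inl (.inl j) => max 0 (Aprop L p i j)
    | .inl (.inr i), .inl (.inr j) => max 0 (Aprop L p i j)
    | .inl (.inr i), .inl (.inl j) => max 0 (-(Aprop L p i j))
    | .inl (.inl i), .inl (.inr j) => max 0 (-(Aprop L p i j))
    | .inl _, .inr _ => 0
    | .inr _, .inl (.inl j) =>
        1 - ∑ i : ι, (max 0 (Aprop L p i j) + max 0 (-(Aprop L p i j)))
    | .inr _, .inl (.inr j) =>
        1 - ∑ i : ι, (max 0 (Aprop L p i j) + max 0 (-(Aprop L p i j)))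
    | .inr _, .inr _ => 1

/-- The orientation-difference operator `T`, sending a function `f` on
`S = X^k_± ∪ {Θ}` to the cochain `Tf(σ_+) = f(σ_+) - f(σ_-)`. -/
noncomputable def Tmat {ι : Type*} [DecidableEq ι] : Matrix ι ((ι ⊕ ι) ⊕ Unit) ℝ :=
  fun τ s =>
    match s with
    | .inl (.inl σ) => if τ = σ then 1 else 0
    | .inl (.inr σ) => if τ = σ then -1 else 0
    | .inr _ => 0

/-- With `P_{L,p}` the p-lazy probability matrix related to an `X^k_+`-matrix
`L` and `A_{L,p}` its propagation matrix, the intertwining relation `A_{L,p} T = T P_{L,p}`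
holds; hence `T P_{L,p}ⁿ ν = A_{L,p}ⁿ T ν` for all `n`. -/
theorem stmt_16 {ι : Type*} [Fintype ι] [DecidableEq ι] [Nonempty ι]
    (L : Matrix ι ι ℝ)
    (hdiag : ∀ i, 0 ≤ L i i)
    (hzero : ∀ i, L i i = 0 → ∀ j, L i j = 0 ∧ L j i = 0)
    (hK : 0 < Kconst L)
    (p : ℝ) (hp0 : 0 ≤ p) (hp1 : p ≤ 1) :
    Aprop L p * Tmat = Tmat * Pprob L p ∧
    ∀ (n : ℕ) (ν : ((ι ⊕ ι) ⊕ Unit) → ℝ),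
      Tmat.mulVec ((Pprob L p ^ n).mulVec ν) = ((Aprop L p) ^ n).mulVec (Tmat.mulVec ν) := by
  have hmax : ∀ x : ℝ, max 0 x - max 0 (-x) = x := by
    intro x
    rcases le_total 0 x with h|h
    · rw [max_eq_right h, max_eq_left (neg_nonpos.mpr h), sub_zero]
    · rw [max_eq_left h, max_eq_right (neg_nonneg.mpr h), zero_sub, neg_neg]
  have h1 : (Aprop L p * (Tmat : Matrix ι ((ι ⊕ ι) ⊕ Unit) ℝ) : Matrix ι ((ι ⊕ ι) ⊕ Unit) ℝ) =
      ((Tmat : Matrix ι ((ι ⊕ ι) ⊕ Unit) ℝ) * Pprob L p : Matrix ι ((ι ⊕ ι) ⊕ Unit) ℝ) := by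
    ext τ s
    rcases s with (σ|σ)|u <;>
      simp [Matrix.mul_apply, Tmat, Pprob, Fintype.sum_sum_type, ite_mul, mul_ite,
        Finset.sum_ite_eq, Finset.sum_ite_eq']
    all_goals linarith [hmax (Aprop L p τ σ)]
  refine ⟨h1, ?_⟩
  have h2 : ∀ n : ℕ, ((Tmat : Matrix ι ((ι ⊕ ι) ⊕ Unit) ℝ) * Pprob L p ^ n : Matrix ι ((ι ⊕ ι) ⊕ Unit) ℝ) =
      (Aprop L p ^ n * (Tmat : Matrix ι ((ι ⊕ ι) ⊕ Unit) ℝ) : Matrix ι ((ι ⊕ ι) ⊕ Unit) ℝ) := by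
    intro n
    induction n with
    | zero => simp
    | succ n ih =>
      rw [pow_succ, pow_succ, ← Matrix.mul_assoc, ih, Matrix.mul_assoc, ← h1,
        ← Matrix.mul_assoc]
  intro n ν
  rw [Matrix.mulVec_mulVec, h2, ← Matrix.mulVec_mulVec]
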